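/- Suppose every flip vector g_j = [A_j^T | u_j], j = 1,…,n+k, corresponds to a stabilizer (i.e., lies in the stabilizer space S after inverting the permutations). Then every valid error candidate produced by order-w OSD, for any w, lies in the same stabilizer coset as the OSD-0 output; hence under degenerate (coset-based) decoding, OSD-w is equivalent to OSD-0. -/
import Mathlib


open Matrix

/-- The flip vector g_j = [A_j^T | u_j]. -/
def flipVec {r c : ℕ} (A : Matrix (Fin r) (Fin c) (ZMod 2)) (j : Fin c) :
    Fin r ⊕ Fin c → ZMod 2 :=
  Sum.elim (fun i => A i j) (Pi.single j 1)

/-- If every flip vector lies in the stabilizer space S, then every order-w OSD candidate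
(obtained from the OSD-0 output e₀ by adding at most w flip vectors) lies in the same
stabilizer coset as e₀; hence OSD-w is equivalent to OSD-0 under degenerate decoding. -/
theorem stmt_11 (n k : ℕ) (A : Matrix (Fin (n - k)) (Fin (n + k)) (ZMod 2))
    (S : Submodule (ZMod 2) (Fin (n - k) ⊕ Fin (n + k) → ZMod 2))
    (hg : ∀ j, flipVec A j ∈ S)
    (e₀ : Fin (n - k) ⊕ Fin (n + k) → ZMod 2) :
    ∀ (w : ℕ) (J : Finset (Fin (n + k))), J.card ≤ w →
      (Submodule.Quotient.mk (e₀ + ∑ j ∈ J, flipVec A j) :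
          (Fin (n - k) ⊕ Fin (n + k) → ZMod 2) ⧸ S)
        = Submodule.Quotient.mk e₀ := by
  intro w J _
  rw [Submodule.Quotient.eq]
  simpa using S.sum_mem (fun j _ => hg j)
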